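/- For all complex numbers Z1, Z2, Z3 with |Zj| < 1 for j = 1,2,3, the polynomial P(Z) = 1 - (2/3)(Z1 + Z2 + Z3) + (1/3)(Z1·Z2 + Z1·Z3 + Z2·Z3) is nonzero. -/

import Mathlib

lemma inv_one_sub_re_gt (z : ℂ) (h : ‖z‖ < 1) :
    (1/2 : ℝ) < ((1 - z)⁻¹).re := by
  have hns : Complex.normSq z < 1 := by
    have := Complex.sq_norm z
    nlinarith [norm_nonneg z]
  have hpos : 0 < Complex.normSq (1 - z) := by
    rw [Complex.normSq_pos]
    intro hz
    have : z = 1 := by linear_combination -hz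
    simp [this] at h
  rw [Complex.inv_re, lt_div_iff₀ hpos]
  have hre : (1 - z).re = 1 - z.re := by simp
  have hnsq : Complex.normSq (1 - z) = 1 - 2 * z.re + Complex.normSq z := by
    simp [Complex.normSq_apply]; ring
  rw [hre, hnsq]; linarith

theorem stmt_0 (Z1 Z2 Z3 : ℂ) (h1 : ‖Z1‖ < 1) (h2 : ‖Z2‖ < 1)
    (h3 : ‖Z3‖ < 1) :
    1 - (2/3 : ℂ) * (Z1 + Z2 + Z3) + (1/3 : ℂ) * (Z1*Z2 + Z1*Z3 + Z2*Z3) ≠ 0 := by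
  set w1 := 1 - Z1
  set w2 := 1 - Z2
  set w3 := 1 - Z3
  have hw : ∀ z : ℂ, ‖z‖ < 1 → (1 - z) ≠ 0 := by
    intro z hz h0
    have : z = 1 := by linear_combination -h0
    simp [this] at hz
  have hw1 := hw Z1 h1
  have hw2 := hw Z2 h2
  have hw3 := hw Z3 h3
  have hsum : (w1⁻¹ + w2⁻¹ + w3⁻¹) ≠ 0 := by
    intro h0
    have := inv_one_sub_re_gt Z1 h1
    have := inv_one_sub_re_gt Z2 h2
    have := inv_one_sub_re_gt Z3 h3
    have hre : (w1⁻¹ + w2⁻¹ + w3⁻¹).re = 0 := by rw [h0]; simp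
    simp only [Complex.add_re] at hre
    linarith
  have key : w2 * w3 + w1 * w3 + w1 * w2 ≠ 0 := by
    have : w2 * w3 + w1 * w3 + w1 * w2 = w1 * w2 * w3 * (w1⁻¹ + w2⁻¹ + w3⁻¹) := by
      field_simp [show w1 ≠ 0 from hw1, show w2 ≠ 0 from hw2, show w3 ≠ 0 from hw3]
    rw [this]
    exact mul_ne_zero (mul_ne_zero (mul_ne_zero hw1 hw2) hw3) hsum
  intro h
  apply key
  simp only [w1, w2, w3]
  linear_combination 3 * h
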